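/- If a graph G has an internal bisection then its complement Ḡ has an external bisection. -/

import Mathlib

open Finset

open scoped Classical in
noncomputable def degIn {V : Type*} (G : SimpleGraph V) (S : Finset V) (x : V) : ℕ :=
  (S.filter fun y => G.Adj x y).card

lemma degIn_eq {V : Type*} [DecidableEq V] (G : SimpleGraph V) [DecidableRel G.Adj]
    (S : Finset V) (x : V) : degIn G S x = (S.filter fun y => G.Adj x y).card := by
  unfold degIn
  congr 1
  exact Finset.filter_congr_decidable _ _ _

open scoped Classical in
lemma degree_eq_degIn_univ {V : Type*} [Fintype V] [DecidableEq V] (G : SimpleGraph V)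
    (x : V) [Fintype (G.neighborSet x)] : G.degree x = degIn G Finset.univ x := by
  rw [← SimpleGraph.card_neighborSet_eq_degree, ← Set.toFinset_card, degIn_eq]
  congr 1
  ext y
  simp

open scoped Classical in
lemma degIn_add_degIn_compl {V : Type*} [Fintype V] [DecidableEq V]
    (G : SimpleGraph V) (A : Finset V) (x : V) :
    degIn G A x + degIn G Aᶜ x = degIn G Finset.univ x := by
  simp only [degIn_eq]
  rw [← Finset.card_union_of_disjoint (Finset.disjoint_filter_filter disjoint_compl_right)]
  congr 1
  rw [← Finset.filter_union, Finset.union_compl]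

open scoped Classical in
lemma degIn_compl_mem {V : Type*} [Fintype V] [DecidableEq V]
    (G : SimpleGraph V) (S : Finset V) (x : V) (hx : x ∈ S) :
    degIn Gᶜ S x + degIn G S x + 1 = S.card := by
  have h1 : (S.filter fun y => G.Adj x y).card + (S.filter fun y => ¬ G.Adj x y).card
      = S.card := Finset.card_filter_add_card_filter_not _
  have h2 : S.filter (fun y => ¬ G.Adj x y) = insert x (S.filter fun y => Gᶜ.Adj x y) := by
    ext y
    simp only [Finset.mem_filter, Finset.mem_insert, SimpleGraph.compl_adj]
    constructor
    · rintro ⟨hy, hna⟩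
      by_cases hxy : x = y
      · left; exact hxy.symm
      · right; exact ⟨hy, hxy, hna⟩
    · intro hcase
      rcases hcase with h' | ⟨hy, _, hna⟩
      · subst h'; exact ⟨hx, G.loopless.irrefl _⟩
      · exact ⟨hy, hna⟩
  have h3 : x ∉ S.filter fun y => Gᶜ.Adj x y := by
    simp [Gᶜ.loopless.irrefl x]
  rw [h2, Finset.card_insert_of_notMem h3] at h1
  simp only [degIn_eq]
  omega

open scoped Classical in
lemma degIn_compl_not_mem {V : Type*} [Fintype V] [DecidableEq V]
    (G : SimpleGraph V) (S : Finset V) (x : V) (hx : x ∉ S) :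
    degIn Gᶜ S x + degIn G S x = S.card := by
  have h2 : S.filter (fun y => ¬ G.Adj x y) = S.filter fun y => Gᶜ.Adj x y := by
    ext y
    simp only [Finset.mem_filter, SimpleGraph.compl_adj]
    constructor
    · rintro ⟨hy, hna⟩
      exact ⟨hy, fun hxy => hx (hxy ▸ hy), hna⟩
    · rintro ⟨hy, _, hna⟩
      exact ⟨hy, hna⟩
  have h1 : (S.filter fun y => G.Adj x y).card + (S.filter fun y => ¬ G.Adj x y).card
      = S.card := Finset.card_filter_add_card_filter_not _
  rw [h2] at h1
  simp only [degIn_eq]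
  omega

lemma key_lemma {V : Type*} [Fintype V] [DecidableEq V]
    (G : SimpleGraph V) (A : Finset V) (x : V) (hx : x ∈ A)
    (hcard : A.card = Aᶜ.card)
    (h : degIn G Finset.univ x ≤ 2 * degIn G A x) :
    degIn Gᶜ Finset.univ x ≤ 2 * degIn Gᶜ Aᶜ x := by
  have e1 := degIn_add_degIn_compl G A x
  have e2 := degIn_add_degIn_compl Gᶜ A x
  have e3 := degIn_compl_mem G A x hx
  have e4 := degIn_compl_not_mem G Aᶜ x (by simp [hx])
  omega

/-- If G has an internal bisection then its complement has an external bisection. -/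
theorem internal_bisection_complement_external {V : Type*} [Fintype V] [DecidableEq V]
    (G : SimpleGraph V) [DecidableRel G.Adj]
    (h : ∃ A : Finset V, 2 * A.card = Fintype.card V ∧
      (∀ x ∈ A, G.degree x ≤ 2 * degIn G A x) ∧
      (∀ y ∈ Aᶜ, G.degree y ≤ 2 * degIn G Aᶜ y)) :
    ∃ A : Finset V, 2 * A.card = Fintype.card V ∧
      (∀ x ∈ A, Gᶜ.degree x ≤ 2 * degIn Gᶜ Aᶜ x) ∧
      (∀ y ∈ Aᶜ, Gᶜ.degree y ≤ 2 * degIn Gᶜ A y) := by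
  obtain ⟨A, hA, hint, hext⟩ := h
  have hsum : A.card + Aᶜ.card = Fintype.card V := by
    rw [Finset.card_add_card_compl]
  have hcard : A.card = Aᶜ.card := by omega
  refine ⟨A, hA, fun x hx => ?_, fun y hy => ?_⟩
  · rw [degree_eq_degIn_univ]
    exact key_lemma G A x hx hcard
      ((degree_eq_degIn_univ G x).symm.trans_le (hint x hx))
  · rw [degree_eq_degIn_univ]
    have := key_lemma G Aᶜ y hy (by rw [compl_compl]; omega)
      ((degree_eq_degIn_univ G y).symm.trans_le (hext y hy))
    rwa [compl_compl] at this
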